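/- For r, s ≥ 0 with r + s > 0 and a unitary U = [[α,−β],[β,α]] with 0 < α < (r+s)β, there exist no complex scalars a, b with ‖[[α−a, −β−ra−sb],[β, α−b]]‖ < 1 (operator norm on M₂(ℂ)). -/

import Mathlib

set_option maxHeartbeats 1000000


noncomputable def act {n : ℕ} (M : Matrix (Fin n) (Fin n) ℂ) :
    EuclideanSpace ℂ (Fin n) →L[ℂ] EuclideanSpace ℂ (Fin n) :=
  LinearMap.toContinuousLinearMap (Matrix.toEuclideanLin M)

lemma key (M : Matrix (Fin 2) (Fin 2) ℂ) (v : Fin 2 → ℂ) :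
    ‖M 0 0 * v 0 + M 0 1 * v 1‖^2 + ‖M 1 0 * v 0 + M 1 1 * v 1‖^2
      ≤ ‖act M‖^2 * (‖v 0‖^2 + ‖v 1‖^2) := by
  have h := (act M).le_opNorm ((WithLp.equiv 2 (Fin 2 → ℂ)).symm v)
  have hact : act M ((WithLp.equiv 2 (Fin 2 → ℂ)).symm v)
      = (WithLp.equiv 2 (Fin 2 → ℂ)).symm (Matrix.mulVec M v) := by
    simp [act, Matrix.toEuclideanLin_apply_piLp_toLp]
  rw [hact] at h
  have hn1 : ‖(WithLp.equiv 2 (Fin 2 → ℂ)).symm (Matrix.mulVec M v)‖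
      = Real.sqrt (‖M 0 0 * v 0 + M 0 1 * v 1‖^2 + ‖M 1 0 * v 0 + M 1 1 * v 1‖^2) := by
    rw [EuclideanSpace.norm_eq]
    simp [Fin.sum_univ_two, Matrix.mulVec, dotProduct]
  have hn2 : ‖(WithLp.equiv 2 (Fin 2 → ℂ)).symm v‖
      = Real.sqrt (‖v 0‖^2 + ‖v 1‖^2) := by
    rw [EuclideanSpace.norm_eq]
    simp [Fin.sum_univ_two]
  rw [hn1, hn2] at h
  have h2 : Real.sqrt (‖M 0 0 * v 0 + M 0 1 * v 1‖^2 + ‖M 1 0 * v 0 + M 1 1 * v 1‖^2) ^ 2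
      ≤ (‖act M‖ * Real.sqrt (‖v 0‖^2 + ‖v 1‖^2))^2 :=
    pow_le_pow_left₀ (Real.sqrt_nonneg _) h 2
  rw [Real.sq_sqrt (by positivity), mul_pow, Real.sq_sqrt (by positivity)] at h2
  exact h2

lemma real_contra (r s α β x u y w : ℝ) (hr : 0 ≤ r) (hs : 0 ≤ s)
    (hαβ : α^2+β^2=1) (hα : 0<α) (hβ : 0<β) (hαlt : α < (r+s)*β)
    (h1 : (α-x)^2+u^2 + β^2 < 1)
    (h2 : ((β+r*x+s*y)^2+(r*u+s*w)^2) + ((α-y)^2+w^2) < 1)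
    (h3 : ((α-x)^2+u^2) + ((β+r*x+s*y)^2+(r*u+s*w)^2) < 1)
    (h4 : β^2 + ((α-y)^2+w^2) < 1) : False := by
  have hx : 0 < x := by nlinarith [sq_nonneg x, sq_nonneg u]
  have hy : 0 < y := by nlinarith [sq_nonneg y, sq_nonneg w]
  have hA : β*(r*x+s*y) < α*x := by
    nlinarith [sq_nonneg (r*x+s*y), sq_nonneg (r*u+s*w), sq_nonneg x, sq_nonneg u]
  have hB : β*(r*x+s*y) < α*y := by
    nlinarith [sq_nonneg (r*x+s*y), sq_nonneg (r*u+s*w), sq_nonneg y, sq_nonneg w]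
  rcases le_total x y with h | h
  · have h5 : (r+s)*β*x ≤ β*(r*x+s*y) := by
      nlinarith [mul_nonneg (mul_nonneg hs hβ.le) (sub_nonneg.2 h)]
    nlinarith [mul_lt_mul_of_pos_right hαlt hx]
  · have h5 : (r+s)*β*y ≤ β*(r*x+s*y) := by
      nlinarith [mul_nonneg (mul_nonneg hr hβ.le) (sub_nonneg.2 h)]
    nlinarith [mul_lt_mul_of_pos_right hαlt hy]


/-- For `r, s ≥ 0` with `r + s > 0`, and `α, β > 0` with `α² + β² = 1` and
`0 < α < (r+s)β`, there are no scalars `a, b` with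
`‖[[α−a, −β−ra−sb],[β, α−b]]‖ < 1` in the operator norm. -/
theorem no_close_approximant (r s α β : ℝ) (hr : 0 ≤ r) (hs : 0 ≤ s)
    (hrs : 0 < r + s) (hαβ : α ^ 2 + β ^ 2 = 1) (hα : 0 < α)
    (hαlt : α < (r + s) * β) (a b : ℂ) :
    ¬ ‖act !![(α : ℂ) - a, -(β : ℂ) - (r : ℂ) * a - (s : ℂ) * b;
              (β : ℂ), (α : ℂ) - b]‖ < 1 := by
  intro hK
  set M : Matrix (Fin 2) (Fin 2) ℂ :=
    !![(α : ℂ) - a, -(β : ℂ) - (r : ℂ) * a - (s : ℂ) * b; (β : ℂ), (α : ℂ) - b] with hM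
  set K : ℝ := ‖act M‖ with hKdef
  have hβ : 0 < β := by
    by_contra hb
    push_neg at hb
    nlinarith [mul_nonpos_of_nonneg_of_nonpos hrs.le hb]
  have hK0 : 0 ≤ K := norm_nonneg _
  have hK2 : K^2 < 1 := by nlinarith
  set c : ℂ := -(β : ℂ) - (r : ℂ) * a - (s : ℂ) * b with hc
  -- F1 : column 1
  have F1 := key M ![1, 0]
  simp [hM, Complex.sq_norm, Complex.normSq_apply, Complex.sub_re, Complex.sub_im,
    Complex.ofReal_re, Complex.ofReal_im, Complex.neg_re, Complex.neg_im,
    Complex.add_re, Complex.add_im, Complex.mul_re, Complex.mul_im, ← hKdef] at F1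
  -- F2 : column 2
  have F2 := key M ![0, 1]
  simp [hM, Complex.sq_norm, Complex.normSq_apply, Complex.sub_re, Complex.sub_im,
    Complex.ofReal_re, Complex.ofReal_im, Complex.neg_re, Complex.neg_im,
    Complex.add_re, Complex.add_im, Complex.mul_re, Complex.mul_im, ← hKdef] at F2
  have hcre : c.re = -β - r*a.re - s*b.re := by
    simp [hc, Complex.sub_re, Complex.neg_re, Complex.mul_re, Complex.ofReal_re,
      Complex.ofReal_im]
  have hcim : c.im = -(r*a.im) - s*b.im := by
    simp [hc, Complex.sub_im, Complex.neg_im, Complex.mul_im, Complex.ofReal_re,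
      Complex.ofReal_im]
  -- F3 : row 1 via conjugate vector
  have F3 := key M ![(starRingEnd ℂ) ((α : ℂ) - a), (starRingEnd ℂ) c]
  simp only [hM, Matrix.of_apply, Matrix.cons_val', Matrix.cons_val_zero,
    Matrix.cons_val_one, Matrix.head_cons, Matrix.head_fin_const,
    Matrix.cons_val_fin_one, Matrix.empty_val'] at F3
  rw [Complex.mul_conj, Complex.mul_conj] at F3
  rw [← Complex.ofReal_add] at F3
  simp only [Complex.norm_real, Real.norm_eq_abs, _root_.sq_abs, RCLike.norm_conj, Complex.sq_norm, Complex.sq_norm, Complex.normSq_ofReal, ← hKdef] at F3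
  have hPQ : Complex.normSq ((α:ℂ) - a) + Complex.normSq c < 1 := by
    nlinarith [F3, Complex.normSq_nonneg ((α:ℂ)-a), Complex.normSq_nonneg c,
      Complex.normSq_nonneg ((β:ℂ) * (starRingEnd ℂ) ((α:ℂ) - a) + ((α:ℂ) - b) * (starRingEnd ℂ) c),
      hK2, hK0]
  -- F4 : row 2 via conjugate vector
  have F4 := key M ![(starRingEnd ℂ) (β:ℂ), (starRingEnd ℂ) ((α:ℂ) - b)]
  simp only [hM, Matrix.of_apply, Matrix.cons_val', Matrix.cons_val_zero,
    Matrix.cons_val_one, Matrix.head_cons, Matrix.head_fin_const,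
    Matrix.cons_val_fin_one, Matrix.empty_val'] at F4
  rw [Complex.mul_conj, Complex.mul_conj] at F4
  rw [← Complex.ofReal_add] at F4
  simp only [Complex.norm_real, Real.norm_eq_abs, _root_.sq_abs, RCLike.norm_conj, Complex.sq_norm, Complex.sq_norm, Complex.normSq_ofReal, ← hKdef] at F4
  have hbR : β^2 + Complex.normSq ((α:ℂ) - b) < 1 := by
    nlinarith [F4, Complex.normSq_nonneg ((β:ℂ)), Complex.normSq_nonneg ((α:ℂ)-b),
      Complex.normSq_nonneg (((α:ℂ) - a) * (starRingEnd ℂ) (β:ℂ) + c * (starRingEnd ℂ) ((α:ℂ) - b)),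
      hK2, hK0]
  have hP : Complex.normSq ((α:ℂ) - a) = (α - a.re)^2 + a.im^2 := by
    simp [Complex.normSq_apply, Complex.sub_re, Complex.sub_im]
    ring
  have hQ : Complex.normSq c = (β + r*a.re + s*b.re)^2 + (r*a.im + s*b.im)^2 := by
    simp [Complex.normSq_apply, hcre, hcim]
    ring
  have hR : Complex.normSq ((α:ℂ) - b) = (α - b.re)^2 + b.im^2 := by
    simp [Complex.normSq_apply, Complex.sub_re, Complex.sub_im]
    ring
  rw [hP, hQ] at hPQ
  rw [hR] at hbR
  rw [hcre, hcim] at F2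
  exact real_contra r s α β a.re a.im b.re b.im hr hs hαβ hα hβ hαlt
    (by nlinarith [F1, hK2]) (by nlinarith [F2, hK2]) hPQ hbR
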